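/- The four sets { x : f_r'⁺(x) = +∞ }, { x : f_r'⁻(x) = +∞ }, { x : f_r'⁺(x) = -∞ }, and { x : f_r'⁻(x) = -∞ } are Lebesgue null sets in [0,1]. -/

import Mathlib

open Set Filter MeasureTheory Metric Topology

/-- Distance from `x` to the nearest integer. -/
noncomputable def phiTW (x : ℝ) : ℝ := Metric.infDist x (Set.range (Int.cast : ℤ → ℝ))

/-- The Takagi–Van der Waerden function `f_r`. -/
noncomputable def fTW (r : ℕ) (x : ℝ) : ℝ :=
  ∑' n : ℕ, (1 / (r : ℝ) ^ n) * phiTW ((r : ℝ) ^ n * x)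

/-- `D_n = { k / r^(n-1) : k ∈ ℤ } ∩ [0,1]` (intended for `n ≥ 1`). -/
def DTW (r n : ℕ) : Set ℝ :=
  {y : ℝ | ∃ k : ℤ, y = (k : ℝ) / (r : ℝ) ^ (n - 1)} ∩ Set.Icc 0 1

/-- `g_n(x) = dist(x, D_n)`. -/
noncomputable def gTW (r n : ℕ) (x : ℝ) : ℝ := Metric.infDist x (DTW r n)

/-- `D̃_n`: midpoints of consecutive points of `D_n`. -/
def DtTW (r n : ℕ) : Set ℝ :=
  {y : ℝ | ∃ k : ℤ, y = (2 * (k : ℝ) + 1) / (2 * (r : ℝ) ^ (n - 1))} ∩ Set.Icc 0 1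

/-- `D = ⋃_{n ≥ 1} D_n`. -/
def DTWall (r : ℕ) : Set ℝ := ⋃ n ≥ 1, DTW r n

/-- `D̃ = ⋃_{n ≥ 1} D̃_n`. -/
def DtTWall (r : ℕ) : Set ℝ := ⋃ n ≥ 1, DtTW r n

/-- Points of `s` isolated from the right within `s` form a countable set. -/
lemma countIso (s : Set ℝ) :
    {x : ℝ | x ∈ s ∧ ∃ ε > (0:ℝ), s ∩ Ioo x (x + ε) = ∅}.Countable := by
  set T := {x : ℝ | x ∈ s ∧ ∃ ε > (0:ℝ), s ∩ Ioo x (x + ε) = ∅} with hT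
  have key : ∀ x ∈ T, ∃ q : ℚ, x < (q : ℝ) ∧ s ∩ Ioo x (q : ℝ) = ∅ := by
    rintro x ⟨hxs, ε, hε, hempty⟩
    obtain ⟨q, hq1, hq2⟩ := exists_rat_btwn (lt_add_of_pos_right x hε)
    refine ⟨q, hq1, subset_eq_empty ?_ hempty⟩
    exact inter_subset_inter_right _ (Ioo_subset_Ioo_right hq2.le)
  choose! q hq1 hq2 using key
  have inj : Set.InjOn q T := by
    intro a ha b hb hab
    by_contra hne
    rcases lt_or_gt_of_ne hne with h | h
    · have : b ∈ s ∩ Ioo a (q a : ℝ) := ⟨hb.1, h, hab ▸ hq1 b hb⟩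
      rw [hq2 a ha] at this; exact this
    · have : a ∈ s ∩ Ioo b (q b : ℝ) := ⟨ha.1, h, hab ▸ hq1 a ha⟩
      rw [hq2 b hb] at this; exact this
  have : Set.InjOn (fun x => Encodable.encode (q x)) T :=
    fun a ha b hb h => inj ha hb (Encodable.encode_injective h)
  exact Set.countable_iff_exists_injOn.2 ⟨_, this⟩

/-- Core lemma: if `f` agrees on `s` with a monotone function `g`, then the set of
points of `s` where the right derivative of `f` is `+∞` is null. -/
lemma coreTW {f g : ℝ → ℝ} {s : Set ℝ} (hg : Monotone g) (hfg : Set.EqOn f g s) :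
    volume {x : ℝ | x ∈ s ∧
      Tendsto (fun h : ℝ => (f (x + h) - f x) / h) (𝓝[>] 0) atTop} = 0 := by
  have hN1 : volume {x : ℝ | ¬ DifferentiableAt ℝ g x} = 0 := by
    simpa [ae_iff] using hg.ae_differentiableAt
  have hN2 : volume {x : ℝ | x ∈ s ∧ ∃ ε > (0:ℝ), s ∩ Ioo x (x + ε) = ∅} = 0 :=
    (countIso s).measure_zero _
  refine measure_mono_null (fun x hx => ?_) (measure_union_null hN1 hN2)
  obtain ⟨hxs, hQ⟩ := hx
  by_cases hd : DifferentiableAt ℝ g x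
  swap
  · exact Or.inl hd
  by_cases hiso : ∃ ε > (0:ℝ), s ∩ Ioo x (x + ε) = ∅
  · exact Or.inr ⟨hxs, hiso⟩
  exfalso
  push_neg at hiso
  have hy : ∀ j : ℕ, ∃ y, y ∈ s ∧ y ∈ Ioo x (x + ((j : ℝ) + 1)⁻¹) := by
    intro j
    have h1 : (0:ℝ) < ((j : ℝ) + 1)⁻¹ := by positivity
    rcases hiso _ h1 with ⟨y, hy1, hy2⟩
    exact ⟨y, hy1, hy2⟩
  choose y hys hyI using hy
  have hx_lt : ∀ j, x < y j := fun j => (hyI j).1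
  have haux : Tendsto (fun j : ℕ => x + ((j : ℝ) + 1)⁻¹) atTop (𝓝 x) := by
    have h0 : Tendsto (fun j : ℕ => ((j : ℝ) + 1)⁻¹) atTop (𝓝 0) := by
      simpa [one_div] using tendsto_one_div_add_atTop_nhds_zero_nat (𝕜 := ℝ)
    simpa using tendsto_const_nhds.add h0
  have hlim : Tendsto y atTop (𝓝 x) :=
    tendsto_of_tendsto_of_tendsto_of_le_of_le tendsto_const_nhds haux
      (fun j => (hx_lt j).le) (fun j => (hyI j).2.le)
  have hlim' : Tendsto y atTop (𝓝[≠] x) :=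
    tendsto_nhdsWithin_of_tendsto_nhds_of_eventually_within _ hlim
      (Eventually.of_forall fun j => (hx_lt j).ne')
  have hder := hd.hasDerivAt
  rw [hasDerivAt_iff_tendsto_slope] at hder
  have h1 : Tendsto (fun j => slope g x (y j)) atTop (𝓝 (deriv g x)) := hder.comp hlim'
  have hh : Tendsto (fun j => y j - x) atTop (𝓝[>] 0) := by
    refine tendsto_nhdsWithin_of_tendsto_nhds_of_eventually_within _ ?_
      (Eventually.of_forall fun j => sub_pos.2 (hx_lt j))
    simpa using hlim.sub_const x
  have h2 : Tendsto (fun j => (f (x + (y j - x)) - f x) / (y j - x)) atTop atTop := hQ.comp hh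
  have hslope : ∀ j, (f (x + (y j - x)) - f x) / (y j - x) = slope g x (y j) := by
    intro j
    rw [add_sub_cancel, slope_def_field, hfg hxs, hfg (hys j)]
  rw [funext hslope] at h2
  exact not_tendsto_atTop_of_tendsto_nhds h1 h2

lemma phiTW_cont : Continuous phiTW := by
  unfold phiTW; exact continuous_infDist_pt _

lemma phiTW_le_one (x : ℝ) : phiTW x ≤ 1 := by
  have h1 : phiTW x ≤ dist x ((⌊x⌋ : ℤ) : ℝ) := infDist_le_dist_of_mem ⟨⌊x⌋, rfl⟩
  have h2 : dist x ((⌊x⌋ : ℤ) : ℝ) ≤ 1 := by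
    rw [Real.dist_eq, abs_le]
    constructor
    · linarith [Int.floor_le x]
    · linarith [Int.lt_floor_add_one x]
  linarith

lemma phiTW_nonneg (x : ℝ) : 0 ≤ phiTW x := infDist_nonneg

lemma fTW_cont {r : ℕ} (hr : 2 ≤ r) : Continuous (fTW r) := by
  have hr1 : (1:ℝ) ≤ (r:ℝ) := by exact_mod_cast le_trans one_le_two (by exact_mod_cast hr)
  have hrpos : (0:ℝ) < (r:ℝ) := lt_of_lt_of_le one_pos hr1
  apply continuous_tsum (u := fun n => (1 / (r:ℝ)) ^ n)
  · intro n
    exact continuous_const.mul (phiTW_cont.comp (continuous_const.mul continuous_id))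
  · apply summable_geometric_of_lt_one (by positivity)
    rw [div_lt_one hrpos]
    exact_mod_cast lt_of_lt_of_le one_lt_two (by exact_mod_cast hr)
  · intro n x
    have hp : (0:ℝ) < (r:ℝ) ^ n := by positivity
    rw [Real.norm_eq_abs, abs_mul, abs_of_nonneg (phiTW_nonneg _),
      abs_of_nonneg (by positivity : (0:ℝ) ≤ 1 / (r:ℝ)^n), div_pow, one_pow]
    calc 1 / (r:ℝ)^n * phiTW ((r:ℝ)^n * x) ≤ 1 / (r:ℝ)^n * 1 := by
          exact mul_le_mul_of_nonneg_left (phiTW_le_one _) (by positivity)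
      _ = 1 / (r:ℝ)^n := mul_one _

/-- Main auxiliary: for a continuous `f`, the set of points where the right derivative
is `+∞` is Lebesgue-null. -/
lemma lemA {f : ℝ → ℝ} (hf : Continuous f) :
    volume {x : ℝ | Tendsto (fun h : ℝ => (f (x + h) - f x) / h) (𝓝[>] 0) atTop} = 0 := by
  set c : ℕ → ℝ := fun n => ((n : ℝ) + 1)⁻¹ with hc
  have hcpos : ∀ n, 0 < c n := fun n => by positivity
  set A : ℕ → ℤ → Set ℝ := fun n k =>
    {x : ℝ | ∀ t ∈ Ioc (0:ℝ) (c n), t ≤ f (x + t) - f x} ∩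
      Icc ((k : ℝ) * c n) (((k : ℝ) + 1) * c n) with hA
  have hmono : ∀ n k, MonotoneOn f (A n k) := by
    intro n k x hx z hz hxz
    rcases eq_or_lt_of_le hxz with rfl | hlt
    · exact le_rfl
    · have ht : z - x ∈ Ioc (0:ℝ) (c n) := by
        constructor
        · linarith
        · have h1 := hx.2.1
          have h2 := hz.2.2
          nlinarith [hcpos n]
      have := hx.1 _ ht
      have hxz' : x + (z - x) = z := by ring
      rw [hxz'] at this
      linarith [ht.1]
  have hnull : ∀ n k, volume {x : ℝ | x ∈ A n k ∧
      Tendsto (fun h : ℝ => (f (x + h) - f x) / h) (𝓝[>] 0) atTop} = 0 := by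
    intro n k
    have hcomp : IsCompact (f '' Icc ((k : ℝ) * c n) (((k : ℝ) + 1) * c n)) :=
      isCompact_Icc.image hf
    have himg : f '' A n k ⊆ f '' Icc ((k : ℝ) * c n) (((k : ℝ) + 1) * c n) :=
      image_mono inter_subset_right
    obtain ⟨g, hgmono, hfg⟩ := (hmono n k).exists_monotone_extension
      (hcomp.bddBelow.mono himg) (hcomp.bddAbove.mono himg)
    exact coreTW hgmono hfg
  refine measure_mono_null (fun x hx => ?_)
    (measure_iUnion_null fun n => measure_iUnion_null fun k => hnull n k)
  have hmem : {h : ℝ | (1:ℝ) ≤ (f (x + h) - f x) / h} ∈ 𝓝[>] (0:ℝ) :=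
    hx.eventually (eventually_ge_atTop 1)
  rw [mem_nhdsGT_iff_exists_Ioo_subset] at hmem
  obtain ⟨u, hu, hsub⟩ := hmem
  have hupos : (0:ℝ) < u := hu
  obtain ⟨n, hn⟩ := exists_nat_gt (1 / u)
  have hcn : c n < u := by
    have h1 : (1:ℝ) / u < (n : ℝ) + 1 := lt_trans hn (lt_add_one _)
    have h2 : (0:ℝ) < (n : ℝ) + 1 := by positivity
    have h3 : c n = 1 / ((n : ℝ) + 1) := by simp [hc, one_div]
    rw [h3, div_lt_iff₀ h2]
    rw [div_lt_iff₀ hupos] at h1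
    nlinarith
  refine mem_iUnion.2 ⟨n, mem_iUnion.2 ⟨⌊x / c n⌋, ⟨⟨?_, ?_, ?_⟩, hx⟩⟩⟩
  · intro t ht
    have h1 := hsub ⟨ht.1, lt_of_le_of_lt ht.2 hcn⟩
    exact (one_le_div ht.1).1 h1
  · exact (le_div_iff₀ (hcpos n)).1 (Int.floor_le _)
  · exact ((div_lt_iff₀ (hcpos n)).1 (Int.lt_floor_add_one (x / c n))).le

lemma neg_null {E : Set ℝ} (hE : volume E = 0) :
    volume ((fun x : ℝ => -x) ⁻¹' E) = 0 := by
  have h1 : E ⊆ toMeasurable volume E := subset_toMeasurable _ _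
  have h2 := (Measure.measurePreserving_neg (volume : Measure ℝ)).measure_preimage
    (measurableSet_toMeasurable volume E).nullMeasurableSet
  refine le_antisymm ?_ (by positivity)
  calc volume ((fun x : ℝ => -x) ⁻¹' E)
      ≤ volume ((fun x : ℝ => -x) ⁻¹' toMeasurable volume E) :=
        measure_mono (preimage_mono h1)
    _ = volume (toMeasurable volume E) := h2
    _ = 0 := by rw [measure_toMeasurable, hE]
    _ ≤ 0 := le_rfl

theorem stmt14 (r : ℕ) (hr : 2 ≤ r) :
    volume {x : ℝ | x ∈ Set.Icc (0:ℝ) 1 ∧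
      Tendsto (fun h : ℝ => (fTW r (x + h) - fTW r x) / h) (𝓝[>] 0) atTop} = 0 ∧
    volume {x : ℝ | x ∈ Set.Icc (0:ℝ) 1 ∧
      Tendsto (fun h : ℝ => (fTW r (x - h) - fTW r x) / (-h)) (𝓝[>] 0) atTop} = 0 ∧
    volume {x : ℝ | x ∈ Set.Icc (0:ℝ) 1 ∧
      Tendsto (fun h : ℝ => (fTW r (x + h) - fTW r x) / h) (𝓝[>] 0) atBot} = 0 ∧
    volume {x : ℝ | x ∈ Set.Icc (0:ℝ) 1 ∧
      Tendsto (fun h : ℝ => (fTW r (x - h) - fTW r x) / (-h)) (𝓝[>] 0) atBot} = 0 := by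
  have hf : Continuous (fTW r) := fTW_cont hr
  set f : ℝ → ℝ := fTW r with hfdef
  refine ⟨?_, ?_, ?_, ?_⟩
  · exact measure_mono_null (fun x hx => hx.2) (lemA hf)
  · -- left derivative +∞ : reflect with F t = -f (-t)
    refine measure_mono_null (fun x hx => ?_) (neg_null (lemA (hf.comp continuous_neg).neg))
    show Tendsto (fun h : ℝ => ((fun t : ℝ => -(f (-t))) (-x + h) -
      (fun t : ℝ => -(f (-t))) (-x)) / h) (𝓝[>] 0) atTop
    have heq : (fun h : ℝ => ((fun t : ℝ => -(f (-t))) (-x + h) -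
        (fun t : ℝ => -(f (-t))) (-x)) / h) = fun h : ℝ => (f (x - h) - f x) / (-h) := by
      funext h
      show (-(f (-(-x + h))) - -(f (-(-x)))) / h = (f (x - h) - f x) / (-h)
      rw [show -(-x + h) = x - h by ring, show -(-x : ℝ) = x by ring, div_neg, ← neg_div]
      ring
    rw [heq]
    exact hx.2
  · -- right derivative -∞ : negate f
    refine measure_mono_null (fun x hx => ?_) (lemA hf.neg)
    show Tendsto (fun h : ℝ => ((-f) (x + h) - (-f) x) / h) (𝓝[>] 0) atTop
    have h1 : Tendsto (fun h : ℝ => -((f (x + h) - f x) / h)) (𝓝[>] 0) atTop :=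
      tendsto_neg_atBot_atTop.comp hx.2
    have heq : (fun h : ℝ => -((f (x + h) - f x) / h)) =
        fun h : ℝ => ((-f) (x + h) - (-f) x) / h := by
      funext h
      show -((f (x + h) - f x) / h) = (-(f (x + h)) - -(f x)) / h
      rw [← neg_div]; ring_nf
    rwa [heq] at h1
  · -- left derivative -∞ : reflect with F t = f (-t)
    refine measure_mono_null (fun x hx => ?_) (neg_null (lemA (hf.comp continuous_neg)))
    show Tendsto (fun h : ℝ => ((fun t : ℝ => f (-t)) (-x + h) -
      (fun t : ℝ => f (-t)) (-x)) / h) (𝓝[>] 0) atTop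
    have h1 : Tendsto (fun h : ℝ => -((f (x - h) - f x) / (-h))) (𝓝[>] 0) atTop :=
      tendsto_neg_atBot_atTop.comp hx.2
    have heq : (fun h : ℝ => -((f (x - h) - f x) / (-h))) = fun h : ℝ =>
        ((fun t : ℝ => f (-t)) (-x + h) - (fun t : ℝ => f (-t)) (-x)) / h := by
      funext h
      show -((f (x - h) - f x) / (-h)) = (f (-(-x + h)) - f (-(-x))) / h
      rw [show -(-x + h) = x - h by ring, show -(-x : ℝ) = x by ring, div_neg, neg_neg]
    rwa [heq] at h1
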